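/- Every integer z ∈ ℤ is the value of a w-NAF-expansion whose weight is at most the weight of every multi-expansion with value z. -/

import Mathlib

/-- The digit set for integer base `b` and window `w`: `0` together with all
integers not divisible by `b` of absolute value less than `|b|^w / 2`. -/
def IntDigitSet (b : ℤ) (w : ℕ) : Set ℤ :=
  {d : ℤ | d = 0 ∨ (¬ b ∣ d ∧ 2 * |d| < |b| ^ w)}

/-- An expansion: a finitely supported sequence of digits. -/
def IsExpansion (D : Set ℤ) (η : ℕ →₀ ℤ) : Prop :=
  ∀ n, η n ∈ D

/-- The `w`-NAF condition: any two distinct nonzero digits have indices at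
distance at least `w`. -/
def IsWNAF (w : ℕ) (η : ℕ →₀ ℤ) : Prop :=
  ∀ m n : ℕ, m ≠ n → η m ≠ 0 → η n ≠ 0 → (w : ℤ) ≤ |(m : ℤ) - (n : ℤ)|

/-- The value of an expansion in base `b`: `∑ η_n · b^n`. -/
def evalue (b : ℤ) (η : ℕ →₀ ℤ) : ℤ :=
  η.sum fun n d => d * b ^ n

/-- The weight of an expansion: the number of nonzero digits. -/
def eweight (η : ℕ →₀ ℤ) : ℕ :=
  η.support.card

/-- A multi-expansion over the digit set `D`: a finite multiset of pairs `(d, n)`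
with `d ∈ D` nonzero. -/
def IsMultiExpansion (D : Set ℤ) (μ : Multiset (ℤ × ℕ)) : Prop :=
  ∀ x ∈ μ, x.1 ∈ D ∧ x.1 ≠ 0

/-- The value of a multi-expansion in base `b`: `∑ d · b^n`. -/
def mvalue (b : ℤ) (μ : Multiset (ℤ × ℕ)) : ℤ :=
  (μ.map fun x => x.1 * b ^ x.2).sum

namespace WnafAux

def NN (b : ℤ) (w : ℕ) : ℤ := |b| ^ w

def dig (b : ℤ) (w : ℕ) (z : ℤ) : ℤ :=
  if 2 * (z % NN b w) < NN b w then z % NN b w else z % NN b w - NN b w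

variable {b : ℤ} {w : ℕ}

lemma NN_pos (hb : 2 ≤ |b|) : 0 < NN b w := pow_pos (by omega) w

lemma four_le_NN (hb : 2 ≤ |b|) (hw : 2 ≤ w) : 4 ≤ NN b w := by
  calc (4:ℤ) = 2 ^ 2 := by norm_num
  _ ≤ 2 ^ w := pow_le_pow_right₀ (by norm_num) hw
  _ ≤ |b| ^ w := pow_le_pow_left₀ (by norm_num) hb w

lemma b_dvd_NN (hw : 2 ≤ w) : b ∣ NN b w := by
  have : b ∣ |b| := (dvd_abs b b).mpr dvd_rfl
  exact this.trans (dvd_pow_self |b| (by omega : w ≠ 0))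

lemma NN_dvd_iff {x : ℤ} : NN b w ∣ x ↔ b ^ w ∣ x := by
  rw [NN, ← abs_pow]; exact abs_dvd _ _

lemma NN_dvd_dig_sub (z : ℤ) : NN b w ∣ z - dig b w z := by
  have h1 : NN b w ∣ z - z % NN b w := by
    have := Int.emod_add_mul_ediv z (NN b w)
    exact ⟨z / NN b w, by linarith⟩
  rw [dig]
  split
  · exact h1
  · have : z - (z % NN b w - NN b w) = (z - z % NN b w) + NN b w := by ring
    rw [this]; exact dvd_add h1 dvd_rfl

lemma dig_sub_dvd (z : ℤ) : b ^ w ∣ z - dig b w z := NN_dvd_iff.mp (NN_dvd_dig_sub z)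

lemma two_abs_dig_le (hb : 2 ≤ |b|) (z : ℤ) : 2 * |dig b w z| ≤ NN b w := by
  have hN : 0 < NN b w := NN_pos hb
  have h0 : 0 ≤ z % NN b w := Int.emod_nonneg z (by omega)
  have h1 : z % NN b w < NN b w := Int.emod_lt_of_pos z hN
  rw [dig]; split <;>
    rcases abs_cases (z % NN b w) with ⟨h2,h3⟩|⟨h2,h3⟩ <;>
    rcases abs_cases (z % NN b w - NN b w) with ⟨h4,h5⟩|⟨h4,h5⟩ <;> omega

/-- in the boundary case, b divides the digit -/
lemma b_dvd_of_boundary (hb : 2 ≤ |b|) (hw : 2 ≤ w) {e : ℤ} (he : 2 * e = -(NN b w)) :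
    b ∣ e := by
  have hev : Even (|b| ^ w) := ⟨-e, by have : NN b w = |b| ^ w := rfl; omega⟩
  have heb : Even |b| := ((Int.even_pow).mp hev).1
  rcases heb with ⟨c, hc⟩
  obtain ⟨k, hk⟩ : ∃ k, w = k + 2 := ⟨w - 2, by omega⟩
  have hw2 : NN b w = |b| ^ k * |b| * (c + c) := by
    rw [NN, hk, pow_succ, pow_succ, hc]
  have he2 : 2 * e = 2 * (-(|b| ^ k * |b| * c)) := by rw [he, hw2]; ring
  have he3 : e = -(|b| ^ k * |b| * c) := by omega
  have : |b| ∣ e := ⟨-(|b| ^ k * c), by rw [he3]; ring⟩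
  exact ((dvd_abs b b).mpr dvd_rfl).trans this

lemma dig_spec_not_dvd (hb : 2 ≤ |b|) (hw : 2 ≤ w) {z : ℤ} (hz : ¬ b ∣ z) :
    ¬ b ∣ dig b w z ∧ 2 * |dig b w z| < NN b w ∧ dig b w z ≠ 0 := by
  have hbd : ¬ b ∣ dig b w z := by
    intro h
    exact hz (by
      have := (b_dvd_NN (b := b) hw).trans (NN_dvd_dig_sub z)
      have : b ∣ (z - dig b w z) + dig b w z := dvd_add this h
      simpa using this)
  refine ⟨hbd, ?_, fun h0 => hbd (h0 ▸ dvd_zero b)⟩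
  rcases lt_or_eq_of_le (two_abs_dig_le hb z) with h | h
  · exact h
  · exfalso
    rcases abs_cases (dig b w z) with ⟨ha, _⟩ | ⟨ha, _⟩
    · -- 2*dig = NN, so dig = NN/2; then b ∣ dig via boundary lemma on -dig
      have : 2 * (-(dig b w z)) = -(NN b w) := by omega
      exact hbd (dvd_neg.mp (b_dvd_of_boundary hb hw this))
    · exact hbd (b_dvd_of_boundary hb hw (by omega))

lemma dig_eq_self (hb : 2 ≤ |b|) {z : ℤ} (h : 2 * |z| < NN b w) : dig b w z = z := by
  have h1 := NN_dvd_dig_sub (b := b) (w := w) z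
  have h2 := two_abs_dig_le (w := w) hb z
  have : z - dig b w z = 0 := by
    refine Int.eq_zero_of_abs_lt_dvd h1 ?_
    have := abs_sub_abs_le_abs_sub z (dig b w z)
    have h3 := abs_sub (z) (dig b w z)
    calc |z - dig b w z| ≤ |z| + |dig b w z| := abs_sub _ _
    _ < NN b w := by omega
  omega

end WnafAux

namespace WnafAux

variable {b : ℤ} {w : ℕ}

lemma natAbs_ediv_lt (hb : 2 ≤ |b|) {z : ℤ} (hz : z ≠ 0) (h : b ∣ z) :
    (z / b).natAbs < z.natAbs := by
  have hb0 : b ≠ 0 := by rintro rfl; simp at hb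
  have hq : b * (z / b) = z := Int.mul_ediv_cancel' h
  have hq0 : z / b ≠ 0 := by rintro h0; rw [h0, mul_zero] at hq; exact hz hq.symm
  have heq : z.natAbs = b.natAbs * (z / b).natAbs := by rw [← Int.natAbs_mul, hq]
  have hb2 : 2 ≤ b.natAbs := by
    have := Int.abs_eq_natAbs b; omega
  have hp : 0 < (z / b).natAbs := Int.natAbs_pos.mpr hq0
  have h3 : 2 * (z / b).natAbs ≤ b.natAbs * (z / b).natAbs :=
    Nat.mul_le_mul_right _ hb2
  omega

lemma quot_natAbs_lt (hb : 2 ≤ |b|) (hw : 2 ≤ w) {z : ℤ} (hz : z ≠ 0) :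
    ((z - dig b w z) / b ^ w).natAbs < z.natAbs := by
  set q := (z - dig b w z) / b ^ w with hqdef
  have hdvd := dig_sub_dvd (b := b) (w := w) z
  have hq : b ^ w * q = z - dig b w z := Int.mul_ediv_cancel' hdvd
  have habs : NN b w * |q| = |z - dig b w z| := by
    rw [NN, ← abs_pow, ← abs_mul, hq]
  have h1 : |z - dig b w z| ≤ |z| + |dig b w z| := abs_sub z (dig b w z)
  have h2 := two_abs_dig_le (w := w) hb z
  have hN := four_le_NN hb hw
  have hz1 : 1 ≤ |z| := by
    rcases abs_cases z with ⟨h,_⟩|⟨h,_⟩ <;> omega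
  have hql : |q| < |z| := by
    by_contra hcon
    push_neg at hcon
    have : NN b w * |z| ≤ NN b w * |q| := by
      apply mul_le_mul_of_nonneg_left hcon (by omega)
    nlinarith
  have := Int.abs_eq_natAbs q
  have := Int.abs_eq_natAbs z
  omega

open Classical in
noncomputable def W (b : ℤ) (hb : 2 ≤ |b|) (w : ℕ) (hw : 2 ≤ w) (z : ℤ) : ℕ :=
  if hz : z = 0 then 0
  else if hd : b ∣ z then W b hb w hw (z / b)
  else W b hb w hw ((z - dig b w z) / b ^ w) + 1
termination_by z.natAbs
decreasing_by
  · exact natAbs_ediv_lt hb hz hd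
  · exact quot_natAbs_lt hb hw (by rintro rfl; exact hd (dvd_zero b))

variable (hb : 2 ≤ |b|) (hw : 2 ≤ w)

lemma W_zero : W b hb w hw 0 = 0 := by rw [W]; simp

lemma W_dvd {z : ℤ} (h : b ∣ z) : W b hb w hw z = W b hb w hw (z / b) := by
  by_cases hz : z = 0
  · subst hz; rw [W_zero]; simp [W_zero]
  · rw [W]; simp [hz, h]

lemma W_not_dvd {z : ℤ} (h : ¬ b ∣ z) :
    W b hb w hw z = W b hb w hw ((z - dig b w z) / b ^ w) + 1 := by
  have hz : z ≠ 0 := by rintro rfl; exact h (dvd_zero b)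
  rw [W]; simp [hz, h]

lemma W_mul_b (z : ℤ) : W b hb w hw (b * z) = W b hb w hw z := by
  have hb0 : b ≠ 0 := by rintro rfl; simp at hb
  rw [W_dvd hb hw ⟨z, rfl⟩, Int.mul_ediv_cancel_left z hb0]

lemma W_pow_mul (j : ℕ) (z : ℤ) : W b hb w hw (b ^ j * z) = W b hb w hw z := by
  induction j with
  | zero => simp
  | succ n ih => rw [pow_succ, mul_comm (b^n) b, mul_assoc, W_mul_b hb hw, ih]

end WnafAux

namespace WnafAux

variable {b : ℤ} {w : ℕ}

lemma exists_strip (hb : 2 ≤ |b|) : ∀ (x : ℤ), x ≠ 0 → ∃ i m, x = b ^ i * m ∧ ¬ b ∣ m := by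
  have hb0 : b ≠ 0 := by rintro rfl; simp at hb
  suffices H : ∀ (n : ℕ) (x : ℤ), x ≠ 0 → x.natAbs = n → ∃ i m, x = b ^ i * m ∧ ¬ b ∣ m by
    exact fun x hx => H x.natAbs x hx rfl
  intro n
  induction n using Nat.strong_induction_on with
  | _ n ih =>
    intro x hx hn
    by_cases h : b ∣ x
    · obtain ⟨y, rfl⟩ := h
      have hy : y ≠ 0 := by rintro rfl; simp at hx
      have hlt : y.natAbs < n := by
        have h1 : (b * y).natAbs = b.natAbs * y.natAbs := Int.natAbs_mul b y
        have hb2 : 2 ≤ b.natAbs := by have := Int.abs_eq_natAbs b; omega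
        have hp : 0 < y.natAbs := Int.natAbs_pos.mpr hy
        have h3 : 2 * y.natAbs ≤ b.natAbs * y.natAbs := Nat.mul_le_mul_right _ hb2
        omega
      obtain ⟨i, m, hm, hbm⟩ := ih y.natAbs hlt y hy rfl
      exact ⟨i + 1, m, by rw [pow_succ, hm]; ring, hbm⟩
    · exact ⟨0, x, by simp, h⟩

variable (hb : 2 ≤ |b|) (hw : 2 ≤ w)

lemma W_digit {d : ℤ} (hd0 : d ≠ 0) (hd : 2 * |d| < NN b w) : W b hb w hw d = 1 := by
  obtain ⟨i, m, rfl, hbm⟩ := exists_strip hb d hd0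
  have hm0 : m ≠ 0 := by rintro rfl; simp at hd0
  have hm : 2 * |m| < NN b w := by
    have h1 : |b ^ i * m| = |b| ^ i * |m| := by rw [abs_mul, abs_pow]
    have h2 : 1 ≤ |b| ^ i := one_le_pow₀ (by omega)
    nlinarith [abs_nonneg m]
  rw [W_pow_mul hb hw, W_not_dvd hb hw hbm, dig_eq_self hb hm]
  simp [W_zero]

end WnafAux

namespace WnafAux

variable {b : ℤ} {w : ℕ}

lemma abs_pow_mul (x : ℤ) (i : ℕ) : |b ^ i * x| = |b| ^ i * |x| := by
  rw [abs_mul, abs_pow]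

variable (hb : 2 ≤ |b|) (hw : 2 ≤ w)

lemma key_aux : ∀ (n : ℕ) (z : ℤ), z.natAbs ≤ n → ∀ (j : ℕ) (d : ℤ), 2 * |d| < NN b w →
    W b hb w hw (b ^ j * z + d) ≤ W b hb w hw z + 1 := by
  have hb0 : b ≠ 0 := by rintro rfl; simp at hb
  have hbw0 : b ^ w ≠ 0 := pow_ne_zero w hb0
  have hN4 : 4 ≤ NN b w := four_le_NN hb hw
  have hNpos : (0:ℤ) < NN b w := NN_pos hb
  have hNabs : ∀ x : ℤ, |b ^ w * x| = NN b w * |x| := fun x => abs_pow_mul x w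
  intro n
  induction n using Nat.strong_induction_on with
  | _ n ihn =>
    intro z hzn j
    induction j using Nat.strong_induction_on with
    | _ j ihj =>
      intro d hd
      by_cases hd0 : d = 0
      · subst hd0; rw [add_zero, W_pow_mul hb hw]; omega
      by_cases hz0 : z = 0
      · subst hz0; rw [mul_zero, zero_add, W_digit hb hw hd0 hd, W_zero]
      by_cases hbz : b ∣ z
      · -- reduce z → z / b, j → j + 1
        have hlt := natAbs_ediv_lt hb hz0 hbz
        have h1 : b ^ (j + 1) * (z / b) + d = b ^ j * z + d := by
          rw [pow_succ, mul_assoc, Int.mul_ediv_cancel' hbz]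
        have h2 := ihn (z / b).natAbs (by omega) (z / b) le_rfl (j + 1) d hd
        rw [h1] at h2
        rw [W_dvd hb hw hbz]
        exact h2
      -- now b ∤ z
      set e := dig b w z with hedef
      obtain ⟨hbe, he2, he0⟩ := dig_spec_not_dvd hb hw hbz
      rw [← hedef] at hbe he2 he0
      set q := (z - e) / b ^ w with hqdef
      have hq : b ^ w * q = z - e := Int.mul_ediv_cancel' (dig_sub_dvd z)
      have hzq : z = b ^ w * q + e := by omega
      have hWz : W b hb w hw z = W b hb w hw q + 1 := W_not_dvd hb hw hbz
      have hqlt : q.natAbs < z.natAbs := quot_natAbs_lt hb hw hz0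
      have IHq : ∀ (j' : ℕ) (d' : ℤ), 2 * |d'| < NN b w →
          W b hb w hw (b ^ j' * q + d') ≤ W b hb w hw q + 1 :=
        fun j' d' h => ihn q.natAbs (by omega) q le_rfl j' d' h
      rcases Nat.eq_zero_or_pos j with hj0 | hj1
      · -- j = 0 : t = z + d
        subst hj0
        rw [pow_zero, one_mul]
        by_cases hsum : e + d = 0
        · have heq : z + d = b ^ w * q := by omega
          rw [heq, W_pow_mul hb hw]; omega
        by_cases hbed : b ∣ (e + d)
        · -- strip the sum
          obtain ⟨i, m, him, hbm⟩ := exists_strip hb (e + d) hsum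
          have hi1 : 1 ≤ i := by
            rcases Nat.eq_zero_or_pos i with h0 | h1
            · exfalso; rw [h0, pow_zero, one_mul] at him; exact hbm (him ▸ hbed)
            · exact h1
          have hm0 : m ≠ 0 := by rintro rfl; rw [mul_zero] at him; exact hsum him
          have habs : |b| ^ i * |m| = |e + d| := by rw [him, abs_mul, abs_pow]
          have hm1 : 1 ≤ |m| := by rcases abs_cases m with ⟨h,_⟩|⟨h,_⟩ <;> omega
          have hed : |e + d| < NN b w := by
            have := abs_add_le e d; omega
          have hbi2 : 2 ≤ |b| ^ i := by
            calc (2:ℤ) ≤ |b| := hb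
            _ = |b| ^ 1 := (pow_one _).symm
            _ ≤ |b| ^ i := pow_le_pow_right₀ (by omega) hi1
          have hNN : NN b w = |b| ^ w := rfl
          have hiw : i < w := by
            have h1 : |b| ^ i ≤ |b| ^ i * |m| := le_mul_of_one_le_right (by positivity) hm1
            have h2 : |b| ^ i < |b| ^ w := by omega
            exact (pow_lt_pow_iff_right₀ (by omega : (1:ℤ) < |b|)).mp h2
          have hm2 : 2 * |m| < NN b w := by
            have h1 : 2 * |m| ≤ |b| ^ i * |m| := mul_le_mul_of_nonneg_right hbi2 (abs_nonneg m)
            omega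
          have heq : z + d = b ^ i * (b ^ (w - i) * q + m) := by
            have hpow : b ^ i * b ^ (w - i) = b ^ w := by
              rw [← pow_add]; congr 1; omega
            calc z + d = b ^ w * q + (e + d) := by omega
            _ = b ^ i * b ^ (w - i) * q + b ^ i * m := by rw [hpow, him]
            _ = b ^ i * (b ^ (w - i) * q + m) := by ring
          rw [heq, W_pow_mul hb hw]
          have := IHq (w - i) m hm2
          omega
        · -- b ∤ e + d : one new digit, carry ε into q
          have hbt : ¬ b ∣ (z + d) := by
            intro hcon
            apply hbed
            have hdw : b ∣ b ^ w * q := Dvd.dvd.mul_right (dvd_pow_self b (by omega : w ≠ 0)) q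
            have : (e + d) = (z + d) - b ^ w * q := by omega
            rw [this]; exact dvd_sub hcon hdw
          set d' := dig b w (z + d) with hd'def
          obtain ⟨hbd', hd'2, hd'0⟩ := dig_spec_not_dvd hb hw hbt
          rw [← hd'def] at hbd' hd'2 hd'0
          have hdvd' : b ^ w ∣ (z + d) - d' := dig_sub_dvd (z + d)
          have hdvdε : b ^ w ∣ e + d - d' := by
            have h1 : e + d - d' = ((z + d) - d') - b ^ w * q := by omega
            rw [h1]; exact dvd_sub hdvd' (Dvd.intro q rfl)
          set ε := (e + d - d') / b ^ w with hεdef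
          have hε : b ^ w * ε = e + d - d' := Int.mul_ediv_cancel' hdvdε
          have hεabs : NN b w * |ε| = |e + d - d'| := by rw [← hNabs, hε]
          have hεb : 2 * |ε| < NN b w := by
            have h1 : |e + d - d'| ≤ |e| + |d| + |d'| := by
              calc |e + d - d'| ≤ |e + d| + |d'| := abs_sub _ _
              _ ≤ |e| + |d| + |d'| := by have := abs_add_le e d; omega
            have h2 : |ε| ≤ 1 := by
              by_contra hcon
              push_neg at hcon
              have : NN b w * 2 ≤ NN b w * |ε| :=
                mul_le_mul_of_nonneg_left (by omega) (by omega)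
              omega
            omega
          have hquot : ((z + d) - d') / b ^ w = q + ε := by
            have h1 : (z + d) - d' = b ^ w * (q + ε) := by
              rw [mul_add, hε, hq]; ring
            rw [h1, Int.mul_ediv_cancel_left _ hbw0]
          rw [W_not_dvd hb hw hbt, ← hd'def, hquot]
          have := IHq 0 ε hεb
          rw [pow_zero, one_mul] at this
          omega
      · -- j ≥ 1
        by_cases hbd : b ∣ d
        · obtain ⟨d₂, rfl⟩ := hbd
          have hd₂ : 2 * |d₂| < NN b w := by
            have h1 : |b * d₂| = |b| * |d₂| := abs_mul b d₂
            have h2 : 2 * |d₂| ≤ |b| * |d₂| := mul_le_mul_of_nonneg_right hb (abs_nonneg d₂)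
            omega
          have heq : b ^ j * z + b * d₂ = b * (b ^ (j - 1) * z + d₂) := by
            have : b * b ^ (j - 1) = b ^ j := by
              rw [← pow_succ']; congr 1; omega
            rw [mul_add, ← mul_assoc, this]
          rw [heq, W_mul_b hb hw]
          exact ihj (j - 1) (by omega) d₂ hd₂
        · -- b ∤ d, j ≥ 1, b ∤ z
          have hbjz : b ∣ b ^ j * z := Dvd.dvd.mul_right (dvd_pow_self b (by omega : j ≠ 0)) z
          have hbt : ¬ b ∣ (b ^ j * z + d) := by
            intro hcon; apply hbd
            have : d = (b ^ j * z + d) - b ^ j * z := by ring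
            rw [this]; exact dvd_sub hcon hbjz
          rcases le_or_gt w j with hwj | hjw
          · -- j ≥ w : digit is exactly d
            have hdvdw : b ^ w ∣ b ^ j * z := Dvd.dvd.mul_right (pow_dvd_pow b hwj) z
            set d' := dig b w (b ^ j * z + d) with hd'def
            have hdvd' : b ^ w ∣ (b ^ j * z + d) - d' := dig_sub_dvd _
            have hdd' : b ^ w ∣ d - d' := by
              have h1 : d - d' = ((b ^ j * z + d) - d') - b ^ j * z := by ring
              rw [h1]; exact dvd_sub hdvd' hdvdw
            have hd'2 := two_abs_dig_le (w := w) hb (b ^ j * z + d)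
            rw [← hd'def] at hd'2
            have : d - d' = 0 := by
              refine Int.eq_zero_of_abs_lt_dvd (NN_dvd_iff.mpr hdd') ?_
              have := abs_sub d d'; omega
            have hdd : d' = d := by omega
            have hquot : ((b ^ j * z + d) - d') / b ^ w = b ^ (j - w) * z := by
              have hpw : b ^ w * b ^ (j - w) = b ^ j := by
                rw [← pow_add]; congr 1; omega
              have h1 : (b ^ j * z + d) - d' = b ^ w * (b ^ (j - w) * z) := by
                rw [hdd, ← mul_assoc, hpw]; ring
              rw [h1, Int.mul_ediv_cancel_left _ hbw0]
            rw [W_not_dvd hb hw hbt, ← hd'def, hquot, W_pow_mul hb hw]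
          · -- 1 ≤ j < w
            set d' := dig b w (b ^ j * z + d) with hd'def
            obtain ⟨hbd', hd'2, hd'0⟩ := dig_spec_not_dvd hb hw hbt
            rw [← hd'def] at hbd' hd'2 hd'0
            have ht : b ^ j * z + d = b ^ w * (b ^ j * q) + (b ^ j * e + d) := by
              calc b ^ j * z + d = b ^ j * (b ^ w * q + e) + d := by rw [← hzq]
              _ = b ^ w * (b ^ j * q) + (b ^ j * e + d) := by ring
            have hdvd' : b ^ w ∣ (b ^ j * z + d) - d' := dig_sub_dvd _
            have hdvdr : b ^ w ∣ b ^ j * e + d - d' := by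
              have h1 : b ^ j * e + d - d' = ((b ^ j * z + d) - d') - b ^ w * (b ^ j * q) := by
                omega
              rw [h1]; exact dvd_sub hdvd' (Dvd.intro _ rfl)
            set r := (b ^ j * e + d - d') / b ^ w with hrdef
            have hr : b ^ w * r = b ^ j * e + d - d' := Int.mul_ediv_cancel' hdvdr
            have hrabs : NN b w * |r| = |b ^ j * e + d - d'| := by rw [← hNabs, hr]
            have hr2 : 2 * |r| < NN b w := by
              have h1 : |b ^ j * e + d - d'| ≤ |b| ^ j * |e| + |d| + |d'| := by
                calc |b ^ j * e + d - d'| ≤ |b ^ j * e + d| + |d'| := abs_sub _ _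
                _ ≤ |b ^ j * e| + |d| + |d'| := by have := abs_add_le (b ^ j * e) d; omega
                _ = |b| ^ j * |e| + |d| + |d'| := by rw [abs_pow_mul]
              have hjw1 : |b| ^ j ≤ |b| ^ (w - 1) :=
                pow_le_pow_right₀ (by omega) (by omega)
              have hw1 : (2:ℤ) ≤ |b| ^ (w - 1) := by
                calc (2:ℤ) ≤ |b| := hb
                _ = |b| ^ 1 := (pow_one _).symm
                _ ≤ |b| ^ (w - 1) := pow_le_pow_right₀ (by omega) (by omega)
              have hNsplit : |b| ^ (w - 1) * |b| = NN b w := by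
                rw [NN, ← pow_succ]; congr 1; omega
              have hNsplit' : |b| ^ (w - 1) * |b| = NN b w := hNsplit
              have h3 : |b| ^ (w - 1) + 2 ≤ NN b w := by
                have h3a : |b| ^ (w - 1) * 2 ≤ |b| ^ (w - 1) * |b| :=
                  mul_le_mul_of_nonneg_left hb (by positivity)
                omega
              have hbig : (|b| ^ (w - 1) + 2) * NN b w ≤ NN b w * NN b w :=
                mul_le_mul_of_nonneg_right h3 (by omega)
              have hbig2 : (|b| ^ (w - 1) + 2) * NN b w
                  = |b| ^ (w - 1) * NN b w + 2 * NN b w := by ring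
              have h2 : |b| ^ j * (2 * |e|) < |b| ^ j * NN b w :=
                mul_lt_mul_of_pos_left he2 (by positivity)
              have h2' : |b| ^ j * (2 * |e|) = 2 * (|b| ^ j * |e|) := by ring
              have h4 : |b| ^ j * NN b w ≤ |b| ^ (w - 1) * NN b w :=
                mul_le_mul_of_nonneg_right hjw1 (by omega)
              have hre : NN b w * (2 * |r|) = 2 * (NN b w * |r|) := by ring
              have h5 : NN b w * (2 * |r|) < NN b w * NN b w := by omega
              exact lt_of_mul_lt_mul_left h5 (by omega)
            have hquot : ((b ^ j * z + d) - d') / b ^ w = b ^ j * q + r := by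
              have h1 : (b ^ j * z + d) - d' = b ^ w * (b ^ j * q + r) := by
                rw [mul_add, hr]; omega
              rw [h1, Int.mul_ediv_cancel_left _ hbw0]
            rw [W_not_dvd hb hw hbt, ← hd'def, hquot]
            have := IHq j r hr2
            omega

end WnafAux

namespace WnafAux

variable {b : ℤ} {w : ℕ} (hb : 2 ≤ |b|) (hw : 2 ≤ w)

lemma key (z : ℤ) (j : ℕ) (d : ℤ) (hd : 2 * |d| < NN b w) :
    W b hb w hw (b ^ j * z + d) ≤ W b hb w hw z + 1 :=
  key_aux hb hw z.natAbs z le_rfl j d hd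

lemma exists_min_snd (μ : Multiset (ℤ × ℕ)) (h : μ ≠ 0) :
    ∃ x ∈ μ, ∀ y ∈ μ, x.2 ≤ y.2 := by
  induction μ using Multiset.induction with
  | empty => exact absurd rfl h
  | cons a s ih =>
    by_cases hs : s = 0
    · subst hs
      exact ⟨a, Multiset.mem_cons_self a 0, by
        intro y hy
        rw [Multiset.mem_cons] at hy
        rcases hy with rfl | hy
        · exact le_rfl
        · simp at hy⟩
    · obtain ⟨x, hxs, hxmin⟩ := ih hs
      rcases le_or_gt a.2 x.2 with hax | hax
      · exact ⟨a, Multiset.mem_cons_self a s, by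
          intro y hy
          rw [Multiset.mem_cons] at hy
          rcases hy with rfl | hy
          · exact le_rfl
          · exact le_trans hax (hxmin y hy)⟩
      · exact ⟨x, Multiset.mem_cons_of_mem hxs, by
          intro y hy
          rw [Multiset.mem_cons] at hy
          rcases hy with rfl | hy
          · omega
          · exact hxmin y hy⟩

lemma mvalue_cons (a : ℤ × ℕ) (s : Multiset (ℤ × ℕ)) :
    mvalue b (a ::ₘ s) = a.1 * b ^ a.2 + mvalue b s := by
  rw [mvalue, mvalue, Multiset.map_cons, Multiset.sum_cons]

lemma mvalue_shift (n₀ : ℕ) (ν : Multiset (ℤ × ℕ)) (hν : ∀ y ∈ ν, n₀ ≤ y.2) :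
    mvalue b ν = b ^ n₀ * mvalue b (ν.map fun y => (y.1, y.2 - n₀)) := by
  rw [mvalue, mvalue, Multiset.map_map]
  rw [← Multiset.sum_map_mul_left]
  apply congrArg
  apply Multiset.map_congr rfl
  intro y hy
  have h1 : n₀ + (y.2 - n₀) = y.2 := by have := hν y hy; omega
  simp only [Function.comp_apply]
  rw [← mul_assoc, mul_comm (b ^ n₀) y.1, mul_assoc, ← pow_add, h1]

lemma W_mvalue : ∀ (c : ℕ) (μ : Multiset (ℤ × ℕ)), Multiset.card μ ≤ c →
    IsMultiExpansion (IntDigitSet b w) μ → W b hb w hw (mvalue b μ) ≤ Multiset.card μ := by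
  intro c
  induction c with
  | zero =>
    intro μ hc hμ
    have : μ = 0 := by
      rw [← Multiset.card_eq_zero]; omega
    subst this
    rw [mvalue]; simp [W_zero]
  | succ c ih =>
    intro μ hc hμ
    by_cases h0 : μ = 0
    · subst h0; rw [mvalue]; simp [W_zero]
    obtain ⟨x, hxμ, hxmin⟩ := exists_min_snd μ h0
    set ν := μ.erase x with hνdef
    have hcons : x ::ₘ ν = μ := Multiset.cons_erase hxμ
    have hνmem : ∀ y ∈ ν, y ∈ μ := fun y hy => Multiset.mem_of_mem_erase hy
    set ν' := ν.map (fun y => (y.1, y.2 - x.2)) with hν'def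
    have hν'exp : IsMultiExpansion (IntDigitSet b w) ν' := by
      intro y hy
      rw [hν'def, Multiset.mem_map] at hy
      obtain ⟨z, hz, rfl⟩ := hy
      exact hμ z (hνmem z hz)
    have hval : mvalue b μ = b ^ x.2 * (b ^ 0 * mvalue b ν' + x.1) := by
      rw [← hcons, mvalue_cons]
      rw [mvalue_shift x.2 ν (fun y hy => hxmin y (hνmem y hy))]
      rw [pow_zero, one_mul]
      ring
    have hdig : 2 * |x.1| < NN b w := by
      obtain ⟨hD, hne⟩ := hμ x hxμ
      rcases hD with h | ⟨_, h⟩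
      · exact absurd h hne
      · exact h
    have hcard : Multiset.card ν' = Multiset.card ν := Multiset.card_map _ _
    have hcardμ : Multiset.card μ = Multiset.card ν + 1 := by
      rw [← hcons, Multiset.card_cons]
    have h1 : W b hb w hw (mvalue b μ) ≤ W b hb w hw (mvalue b ν') + 1 := by
      rw [hval, W_pow_mul hb hw]
      exact key hb hw (mvalue b ν') 0 x.1 hdig
    have h2 := ih ν' (by omega) hν'exp
    omega

end WnafAux

namespace WnafAux

variable {b : ℤ} {w : ℕ}

noncomputable def shiftF (k : ℕ) (η : ℕ →₀ ℤ) : ℕ →₀ ℤ :=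
  Finsupp.embDomain ⟨fun n => n + k, fun a a' h => by simp only at h; omega⟩ η

lemma shiftF_apply (k : ℕ) (η : ℕ →₀ ℤ) (n : ℕ) : shiftF k η (n + k) = η n :=
  Finsupp.embDomain_apply_self _ η n

lemma shiftF_cases (k : ℕ) (η : ℕ →₀ ℤ) (n : ℕ) :
    shiftF k η n = 0 ∨ ∃ m, n = m + k ∧ shiftF k η n = η m := by
  by_cases h : ∃ m, m + k = n
  · obtain ⟨m, rfl⟩ := h
    exact Or.inr ⟨m, rfl, shiftF_apply k η m⟩
  · left
    apply Finsupp.embDomain_notin_range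
    intro hcon
    obtain ⟨m, hm⟩ := hcon
    exact h ⟨m, hm⟩

lemma eweight_shiftF (k : ℕ) (η : ℕ →₀ ℤ) : eweight (shiftF k η) = eweight η := by
  rw [eweight, eweight, shiftF, Finsupp.support_embDomain, Finset.card_map]

lemma evalue_shiftF (k : ℕ) (η : ℕ →₀ ℤ) : evalue b (shiftF k η) = b ^ k * evalue b η := by
  rw [evalue, shiftF, Finsupp.sum_embDomain, evalue, Finsupp.mul_sum]
  apply Finsupp.sum_congr
  intro a _
  show η a * b ^ (a + k) = b ^ k * (η a * b ^ a)
  rw [pow_add]; ring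

variable (hb : 2 ≤ |b|) (hw : 2 ≤ w)

lemma exists_naf : ∀ (n : ℕ) (z : ℤ), z.natAbs ≤ n →
    ∃ η : ℕ →₀ ℤ, IsExpansion (IntDigitSet b w) η ∧ IsWNAF w η ∧ evalue b η = z ∧
      eweight η = W b hb w hw z := by
  have hb0 : b ≠ 0 := by rintro rfl; simp at hb
  intro n
  induction n using Nat.strong_induction_on with
  | _ n ihn =>
    intro z hzn
    by_cases hz0 : z = 0
    · subst hz0
      refine ⟨0, fun n => Or.inl rfl, fun m n hmn hm _ => absurd rfl hm, ?_, ?_⟩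
      · rw [evalue, Finsupp.sum_zero_index]
      · rw [eweight, Finsupp.support_zero, Finset.card_empty, W_zero]
    by_cases hbz : b ∣ z
    · have hlt := natAbs_ediv_lt hb hz0 hbz
      obtain ⟨η', hexp, hnaf, hval, hwt⟩ := ihn (z / b).natAbs (by omega) (z / b) le_rfl
      refine ⟨shiftF 1 η', ?_, ?_, ?_, ?_⟩
      · intro n
        rcases shiftF_cases 1 η' n with h | ⟨m, _, h⟩
        · rw [h]; exact Or.inl rfl
        · rw [h]; exact hexp m
      · intro m n hmn hm hn
        rcases shiftF_cases 1 η' m with h | ⟨m₁, rfl, h⟩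
        · exact absurd h hm
        rcases shiftF_cases 1 η' n with h' | ⟨n₁, rfl, h'⟩
        · exact absurd h' hn
        rw [h] at hm; rw [h'] at hn
        have h2 := hnaf m₁ n₁ (by omega) hm hn
        rcases abs_cases ((m₁:ℤ) - (n₁:ℤ)) with ⟨ha, _⟩ | ⟨ha, _⟩ <;>
          rcases abs_cases (((m₁ + 1 : ℕ):ℤ) - ((n₁ + 1 : ℕ):ℤ)) with ⟨hc, _⟩ | ⟨hc, _⟩ <;>
          push_cast at * <;> omega
      · rw [evalue_shiftF, hval, pow_one, Int.mul_ediv_cancel' hbz]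
      · rw [eweight_shiftF, hwt, W_dvd hb hw hbz]
    · -- b ∤ z
      set e := dig b w z with hedef
      obtain ⟨hbe, he2, he0⟩ := dig_spec_not_dvd hb hw hbz
      rw [← hedef] at hbe he2 he0
      set q := (z - e) / b ^ w with hqdef
      have hq : b ^ w * q = z - e := Int.mul_ediv_cancel' (dig_sub_dvd z)
      have hWz : W b hb w hw z = W b hb w hw q + 1 := W_not_dvd hb hw hbz
      have hqlt : q.natAbs < z.natAbs := quot_natAbs_lt hb hw hz0
      obtain ⟨η', hexp, hnaf, hval, hwt⟩ := ihn q.natAbs (by omega) q le_rfl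
      set η : ℕ →₀ ℤ := Finsupp.single 0 e + shiftF w η' with hηdef
      have happly : ∀ n, η n = Finsupp.single 0 e n + shiftF w η' n := fun n =>
        Finsupp.add_apply _ _ _
      have h0 : η 0 = e := by
        rw [happly, Finsupp.single_apply]
        rcases shiftF_cases w η' 0 with h | ⟨m, hm, _⟩
        · rw [h]; simp
        · omega
      have hpos : ∀ n, n ≠ 0 → η n = shiftF w η' n := by
        intro n hn
        rw [happly, Finsupp.single_apply]
        simp [Ne.symm hn]
      refine ⟨η, ?_, ?_, ?_, ?_⟩
      · intro n
        by_cases hn : n = 0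
        · subst hn; rw [h0]; exact Or.inr ⟨hbe, he2⟩
        · rw [hpos n hn]
          rcases shiftF_cases w η' n with h | ⟨m, _, h⟩
          · rw [h]; exact Or.inl rfl
          · rw [h]; exact hexp m
      · intro m n hmn hm hn
        by_cases hm0 : m = 0 <;> by_cases hn0 : n = 0
        · omega
        · subst hm0
          rw [hpos n hn0] at hn
          rcases shiftF_cases w η' n with h | ⟨n₁, rfl, h⟩
          · exact absurd h hn
          rcases abs_cases ((0:ℤ) - ((n₁ + w : ℕ):ℤ)) with ⟨hc, _⟩ | ⟨hc, _⟩ <;>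
            push_cast at * <;> omega
        · subst hn0
          rw [hpos m hm0] at hm
          rcases shiftF_cases w η' m with h | ⟨m₁, rfl, h⟩
          · exact absurd h hm
          rcases abs_cases (((m₁ + w : ℕ):ℤ) - (0:ℤ)) with ⟨hc, _⟩ | ⟨hc, _⟩ <;>
            push_cast at * <;> omega
        · rw [hpos m hm0] at hm; rw [hpos n hn0] at hn
          rcases shiftF_cases w η' m with h | ⟨m₁, rfl, h⟩
          · exact absurd h hm
          rcases shiftF_cases w η' n with h' | ⟨n₁, rfl, h'⟩
          · exact absurd h' hn
          rw [h] at hm; rw [h'] at hn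
          have h2 := hnaf m₁ n₁ (by omega) hm hn
          rcases abs_cases ((m₁:ℤ) - (n₁:ℤ)) with ⟨ha, _⟩ | ⟨ha, _⟩ <;>
            rcases abs_cases (((m₁ + w : ℕ):ℤ) - ((n₁ + w : ℕ):ℤ)) with ⟨hc, _⟩ | ⟨hc, _⟩ <;>
            push_cast at * <;> omega
      · have hadd : evalue b η = evalue b (Finsupp.single 0 e) + evalue b (shiftF w η') := by
          rw [hηdef, evalue, evalue, evalue]
          exact Finsupp.sum_add_index' (h := fun n d => d * b ^ n)
            (fun a => zero_mul _) (fun a b₁ b₂ => add_mul b₁ b₂ _)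
        have hsingle : evalue b (Finsupp.single 0 e) = e := by
          rw [evalue, Finsupp.sum_single_index (zero_mul (b ^ 0)), pow_zero, mul_one]
        rw [hadd, hsingle, evalue_shiftF, hval]
        omega
      · have hsupp : η.support = (Finsupp.single 0 e).support ∪ (shiftF w η').support := by
          rw [hηdef]
          apply Finsupp.support_add_eq
          rw [Finsupp.support_single_ne_zero 0 he0]
          rw [Finset.disjoint_left]
          intro a ha
          rw [Finset.mem_singleton] at ha
          subst ha
          intro hcon
          rw [Finsupp.mem_support_iff] at hcon
          rcases shiftF_cases w η' 0 with h | ⟨m, hm, _⟩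
          · exact hcon h
          · omega
        rw [eweight, hsupp, Finset.card_union_of_disjoint, Finsupp.support_single_ne_zero 0 he0,
          Finset.card_singleton, ← eweight, eweight_shiftF, hwt, hWz]
        · omega
        · rw [Finsupp.support_single_ne_zero 0 he0, Finset.disjoint_left]
          intro a ha
          rw [Finset.mem_singleton] at ha
          subst ha
          intro hcon
          rw [Finsupp.mem_support_iff] at hcon
          rcases shiftF_cases w η' 0 with h | ⟨m, hm, _⟩
          · exact hcon h
          · omega

end WnafAux


/-- Optimality of `w`-NAFs for integer bases: every integer is the value of a
`w`-NAF-expansion whose weight is minimal among all multi-expansions of the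
same value. -/
theorem wnaf_optimal_integer_base (b : ℤ) (hb : 2 ≤ |b|) (w : ℕ) (hw : 2 ≤ w) :
    ∀ z : ℤ, ∃ η : ℕ →₀ ℤ,
      IsExpansion (IntDigitSet b w) η ∧ IsWNAF w η ∧ evalue b η = z ∧
      ∀ μ : Multiset (ℤ × ℕ), IsMultiExpansion (IntDigitSet b w) μ →
        mvalue b μ = z → eweight η ≤ Multiset.card μ := by
  intro z
  obtain ⟨η, h1, h2, h3, h4⟩ := WnafAux.exists_naf hb hw z.natAbs z le_rfl
  refine ⟨η, h1, h2, h3, ?_⟩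
  intro μ hμ hval
  have h5 := WnafAux.W_mvalue hb hw (Multiset.card μ) μ le_rfl hμ
  rw [hval] at h5
  omega
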